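/- Let c_1, ..., c_n : ℕ → ℝ be nondecreasing functions with c_i(0) = 0 and lim_{k→∞} c_i(k)^2/k = 4 V_i with V_i > 0 for each i. Define C(k) = max over (k_1,...,k_n) with k_1+...+k_n = k of the sum c_1(k_1)+...+c_n(k_n). Then lim_{k→∞} C(k)^2/k = 4(V_1+...+V_n). -/
import Mathlib

open Filter

private lemma my_sqrt_add_le {x y : ℝ} (hx : 0 ≤ x) (hy : 0 ≤ y) :
    Real.sqrt (x + y) ≤ Real.sqrt x + Real.sqrt y := by
  have h : x + y ≤ (Real.sqrt x + Real.sqrt y) ^ 2 := by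
    rw [add_sq, Real.sq_sqrt hx, Real.sq_sqrt hy]
    nlinarith [Real.sqrt_nonneg x, Real.sqrt_nonneg y]
  calc Real.sqrt (x + y) ≤ Real.sqrt ((Real.sqrt x + Real.sqrt y) ^ 2) := Real.sqrt_le_sqrt h
    _ = Real.sqrt x + Real.sqrt y :=
      Real.sqrt_sq (by positivity)

theorem ech_disjoint_union_weyl (n : ℕ) (hn : 0 < n) (c : Fin n → ℕ → ℝ)
    (hmono : ∀ i, Monotone (c i)) (h0 : ∀ i, c i 0 = 0)
    (V : Fin n → ℝ) (hV : ∀ i, 0 < V i)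
    (hlim : ∀ i, Tendsto (fun k : ℕ => (c i k) ^ 2 / (k : ℝ)) atTop (nhds (4 * V i)))
    (C : ℕ → ℝ)
    (hC : ∀ k : ℕ, IsGreatest
      {s : ℝ | ∃ f : Fin n → ℕ, (∑ i, f i) = k ∧ s = ∑ i, c i (f i)} (C k)) :
    Tendsto (fun k : ℕ => (C k) ^ 2 / (k : ℝ)) atTop (nhds (4 * ∑ i, V i)) := by
  classical
  have hcnn : ∀ i m, 0 ≤ c i m := fun i m => (h0 i) ▸ hmono i (Nat.zero_le m)
  set Vt : ℝ := ∑ i, V i with hVtdef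
  have hVt0 : 0 < Vt := Finset.sum_pos (fun i _ => hV i) ⟨⟨0, hn⟩, Finset.mem_univ _⟩
  have hCub : ∀ k (f : Fin n → ℕ), (∑ i, f i) = k → (∑ i, c i (f i)) ≤ C k :=
    fun k f hf => (hC k).2 ⟨f, hf, rfl⟩
  -- The key statement about C k / √k
  have key : Tendsto (fun k : ℕ => C k / Real.sqrt k) atTop (nhds (2 * Real.sqrt Vt)) := by
    rw [tendsto_order]
    constructor
    · -- lower bound
      -- allocation
      set i0 : Fin n := ⟨0, hn⟩
      set a : Fin n → ℝ := fun i => V i / Vt with hadef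
      have ha0 : ∀ i, 0 < a i := fun i => div_pos (hV i) hVt0
      have hasum : ∑ i, a i = 1 := by
        rw [hadef, ← Finset.sum_div, ← hVtdef, div_self hVt0.ne']
      set g : ℕ → Fin n → ℕ := fun k i =>
        if i = i0 then k - ∑ j ∈ Finset.univ.erase i0, ⌊a j * k⌋₊ else ⌊a i * k⌋₊ with hgdef
      have hgi0 : ∀ k, g k i0 = k - ∑ j ∈ Finset.univ.erase i0, ⌊a j * k⌋₊ :=
        fun k => if_pos rfl
      have hgj : ∀ k j, j ≠ i0 → g k j = ⌊a j * k⌋₊ := fun k j hj => if_neg hj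
      have hS_le : ∀ k : ℕ, (∑ j ∈ Finset.univ.erase i0, ⌊a j * k⌋₊) ≤ k := by
        intro k
        have h1 : ((∑ j ∈ Finset.univ.erase i0, ⌊a j * k⌋₊ : ℕ) : ℝ) ≤ (k : ℝ) := by
          push_cast
          calc ∑ j ∈ Finset.univ.erase i0, (⌊a j * k⌋₊ : ℝ)
              ≤ ∑ j ∈ Finset.univ.erase i0, a j * k :=
                Finset.sum_le_sum fun j _ => Nat.floor_le
                  (mul_nonneg (ha0 j).le (Nat.cast_nonneg k))
            _ ≤ ∑ j, a j * k := Finset.sum_le_sum_of_subset_of_nonneg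
                (Finset.erase_subset _ _)
                (fun j _ _ => mul_nonneg (ha0 j).le (Nat.cast_nonneg k))
            _ = (k : ℝ) := by rw [← Finset.sum_mul, hasum, one_mul]
        exact_mod_cast h1
      have hgsum : ∀ k, ∑ i, g k i = k := by
        intro k
        rw [← Finset.add_sum_erase _ _ (Finset.mem_univ i0), hgi0,
          Finset.sum_congr rfl (fun j hj => hgj k j (Finset.ne_of_mem_erase hj))]
        exact Nat.sub_add_cancel (hS_le k)
      have hfloor : ∀ b : ℝ, 0 ≤ b →
          Tendsto (fun k : ℕ => (⌊b * (k : ℝ)⌋₊ : ℝ) / (k : ℝ)) atTop (nhds b) :=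
        fun b hb => (tendsto_nat_floor_mul_div_atTop hb).comp tendsto_natCast_atTop_atTop
      have hrat : ∀ i, Tendsto (fun k : ℕ => (g k i : ℝ) / (k : ℝ)) atTop (nhds (a i)) := by
        intro i
        by_cases hi : i = i0
        · rw [hi]
          have h1 : Tendsto (fun k : ℕ =>
              1 - ∑ j ∈ Finset.univ.erase i0, (⌊a j * (k : ℝ)⌋₊ : ℝ) / (k : ℝ)) atTop
              (nhds (1 - ∑ j ∈ Finset.univ.erase i0, a j)) :=
            tendsto_const_nhds.sub
              (tendsto_finset_sum _ fun j _ => hfloor (a j) (ha0 j).le)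
          have h2 : (1 : ℝ) - ∑ j ∈ Finset.univ.erase i0, a j = a i0 := by
            have := Finset.add_sum_erase Finset.univ a (Finset.mem_univ i0)
            rw [hasum] at this
            linarith
          rw [h2] at h1
          refine h1.congr' ?_
          filter_upwards [eventually_ge_atTop 1] with k hk
          have hk0 : (k : ℝ) ≠ 0 := by positivity
          rw [hgi0, Nat.cast_sub (hS_le k)]
          push_cast
          rw [sub_div, Finset.sum_div, div_self hk0]
        · exact (hfloor (a i) (ha0 i).le).congr
            (fun k => by rw [hgj k i hi])
      have hginf : ∀ i, Tendsto (fun k : ℕ => g k i) atTop atTop := by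
        intro i
        rw [← tendsto_natCast_atTop_iff (R := ℝ)]
        refine tendsto_atTop_mono' atTop ?_
          ((tendsto_natCast_atTop_atTop).const_mul_atTop
            (half_pos (ha0 i)) : Tendsto (fun k : ℕ => a i / 2 * (k : ℝ)) atTop atTop)
        filter_upwards [(hrat i).eventually (eventually_gt_nhds (half_lt_self (ha0 i))),
            eventually_ge_atTop 1] with k h1 h2
        have hk0 : (0 : ℝ) < k := by exact_mod_cast h2
        rw [lt_div_iff₀ hk0] at h1
        exact h1.le
      have hterm : ∀ i, Tendsto (fun k : ℕ => c i (g k i) / Real.sqrt k) atTop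
          (nhds (2 * V i / Real.sqrt Vt)) := by
        intro i
        have hsq : Tendsto (fun k : ℕ => (c i (g k i)) ^ 2 / (k : ℝ)) atTop
            (nhds (4 * V i * a i)) := by
          have h1 := (hlim i).comp (hginf i)
          have h2 := (h1.mul (hrat i))
          refine h2.congr' ?_
          filter_upwards [(hginf i).eventually_ge_atTop 1] with k hk
          have hg0 : ((g k i : ℕ) : ℝ) ≠ 0 := by
            have : (0:ℕ) < g k i := hk
            positivity
          simp only [Function.comp]
          field_simp
        have h3 := (Real.continuous_sqrt.tendsto _).comp hsq
        have h4 : Real.sqrt (4 * V i * a i) = 2 * V i / Real.sqrt Vt := by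
          have : 4 * V i * a i = (2 * V i) ^ 2 / Vt := by
            rw [hadef]; field_simp; ring
          rw [this, Real.sqrt_div (sq_nonneg _), Real.sqrt_sq (by linarith [hV i])]
        rw [h4] at h3
        refine h3.congr' ?_
        filter_upwards [eventually_ge_atTop 1] with k hk
        simp only [Function.comp]
        rw [Real.sqrt_div (sq_nonneg _), Real.sqrt_sq (hcnn i _)]
      have hL : Tendsto (fun k : ℕ => ∑ i, c i (g k i) / Real.sqrt k) atTop
          (nhds (2 * Real.sqrt Vt)) := by
        have h1 := tendsto_finset_sum Finset.univ (fun i (_ : i ∈ Finset.univ) => hterm i)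
        have h2 : ∑ i, 2 * V i / Real.sqrt Vt = 2 * Real.sqrt Vt := by
          rw [show ∑ i, 2 * V i / Real.sqrt Vt = 2 * (∑ i, V i) / Real.sqrt Vt by
            rw [Finset.mul_sum, Finset.sum_div], ← hVtdef, mul_div_assoc, Real.div_sqrt]
        rwa [h2] at h1
      intro b hb
      filter_upwards [hL.eventually (eventually_gt_nhds hb), eventually_ge_atTop 1]
        with k h1 h2
      have hsk : (0 : ℝ) < Real.sqrt k := Real.sqrt_pos.2 (by exact_mod_cast h2)
      calc b < ∑ i, c i (g k i) / Real.sqrt k := h1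
        _ = (∑ i, c i (g k i)) / Real.sqrt k := by rw [Finset.sum_div]
        _ ≤ C k / Real.sqrt k := by
            gcongr
            exact hCub k (g k) (hgsum k)
    · -- upper bound
      intro b hb
      set ε : ℝ := b - 2 * Real.sqrt Vt with hεdef
      have hε : 0 < ε := by simp [hεdef]; linarith
      set δ : ℝ := (ε / 4) ^ 2 / n with hδdef
      have hδ : 0 < δ := by
        rw [hδdef]
        have : (0:ℝ) < n := by exact_mod_cast hn
        positivity
      have hnδ : (n : ℝ) * δ = (ε / 4) ^ 2 := by
        rw [hδdef, mul_div_cancel₀]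
        exact_mod_cast hn.ne'
      obtain ⟨N, hN⟩ := eventually_atTop.1 (eventually_all.2 (fun i : Fin n =>
        (hlim i).eventually (eventually_lt_nhds
          (show 4 * V i < 4 * (V i + δ) by linarith))))
      have hbd : ∀ i m, c i m ≤ 2 * Real.sqrt ((V i + δ) * m) + c i N := by
        intro i m
        rcases lt_or_ge m N with h | h
        · have h1 : c i m ≤ c i N := hmono i h.le
          have h2 : 0 ≤ Real.sqrt ((V i + δ) * m) := Real.sqrt_nonneg _
          linarith
        · rcases Nat.eq_zero_or_pos m with rfl | hm
          · have : c i 0 = 0 := h0 i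
            have h2 : 0 ≤ Real.sqrt ((V i + δ) * 0) := Real.sqrt_nonneg _
            have h3 : 0 ≤ c i N := hcnn i N
            push_cast
            linarith
          · have hm0 : (0 : ℝ) < m := by exact_mod_cast hm
            have h1 := hN m h i
            rw [div_lt_iff₀ hm0] at h1
            have h2 : c i m ^ 2 ≤ (2 * Real.sqrt ((V i + δ) * m)) ^ 2 := by
              rw [mul_pow, Real.sq_sqrt (mul_nonneg (by linarith [hV i] : (0:ℝ) ≤ V i + δ) (Nat.cast_nonneg m))]
              nlinarith
            have h3 : c i m ≤ 2 * Real.sqrt ((V i + δ) * m) := by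
              have h4 := Real.sqrt_le_sqrt h2
              rwa [Real.sqrt_sq (hcnn i m), Real.sqrt_sq (by positivity)] at h4
            have h5 : 0 ≤ c i N := hcnn i N
            linarith
      set M : ℝ := ∑ i, c i N with hMdef
      have hM0 : 0 ≤ M := Finset.sum_nonneg fun i _ => hcnn i N
      have hsk_top : Tendsto (fun k : ℕ => Real.sqrt k) atTop atTop := by
        have h := (tendsto_rpow_atTop (by norm_num : (0:ℝ) < 1/2)).comp
          tendsto_natCast_atTop_atTop
        exact h.congr fun k => (Real.sqrt_eq_rpow _).symm
      have hMk : Tendsto (fun k : ℕ => M / Real.sqrt k) atTop (nhds 0) :=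
        Tendsto.div_atTop tendsto_const_nhds hsk_top
      filter_upwards [hMk.eventually (eventually_lt_nhds (half_pos hε)),
        eventually_ge_atTop 1] with k hk1 hk2
      have hsk : (0 : ℝ) < Real.sqrt k := Real.sqrt_pos.2 (by exact_mod_cast hk2)
      obtain ⟨f, hf, hCk⟩ := (hC k).1
      have step1 : C k ≤ 2 * ((Real.sqrt Vt + ε / 4) * Real.sqrt k) + M := by
        rw [hCk]
        have h1 : ∑ i, c i (f i) ≤ ∑ i, (2 * Real.sqrt ((V i + δ) * f i) + c i N) :=
          Finset.sum_le_sum fun i _ => hbd i (f i)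
        have h2 : ∑ i, (2 * Real.sqrt ((V i + δ) * f i) + c i N)
            = 2 * ∑ i, Real.sqrt (V i + δ) * Real.sqrt (f i) + M := by
          rw [Finset.sum_add_distrib, ← Finset.mul_sum, hMdef]
          congr 1
          congr 1
          exact Finset.sum_congr rfl fun i _ => by
            rw [Real.sqrt_mul (by linarith [hV i])]
        have h3 : ∑ i, Real.sqrt (V i + δ) * Real.sqrt (f i)
            ≤ Real.sqrt (∑ i, (V i + δ)) * Real.sqrt (∑ i, (f i : ℝ)) :=
          Real.sum_sqrt_mul_sqrt_le _ (fun i => by linarith [hV i]) (fun i => by positivity)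
        have h4 : Real.sqrt (∑ i, ((f i : ℕ) : ℝ)) = Real.sqrt k := by
          congr 1
          rw [← Nat.cast_sum]
          exact_mod_cast congrArg (Nat.cast (R := ℝ)) hf
        have h5 : Real.sqrt (∑ i, (V i + δ)) ≤ Real.sqrt Vt + ε / 4 := by
          have h6 : ∑ i, (V i + δ) = Vt + n * δ := by
            rw [Finset.sum_add_distrib, ← hVtdef, Finset.sum_const, Finset.card_univ,
              Fintype.card_fin, nsmul_eq_mul]
          rw [h6]
          calc Real.sqrt (Vt + n * δ) ≤ Real.sqrt Vt + Real.sqrt ((n : ℝ) * δ) :=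
                my_sqrt_add_le hVt0.le (by positivity)
            _ = Real.sqrt Vt + ε / 4 := by
                rw [hnδ, Real.sqrt_sq (by positivity)]
        rw [h4] at h3
        have h7 : Real.sqrt (∑ i, (V i + δ)) * Real.sqrt k
            ≤ (Real.sqrt Vt + ε / 4) * Real.sqrt k :=
          mul_le_mul_of_nonneg_right h5 hsk.le
        have h8 := h3.trans h7
        calc ∑ i, c i (f i) ≤ 2 * ∑ i, Real.sqrt (V i + δ) * Real.sqrt (f i) + M := by
              rw [← h2]; exact h1
          _ ≤ 2 * ((Real.sqrt Vt + ε / 4) * Real.sqrt k) + M := by linarith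
      have step2 : C k / Real.sqrt k ≤ 2 * (Real.sqrt Vt + ε / 4) + M / Real.sqrt k := by
        rw [div_le_iff₀ hsk, add_mul, div_mul_cancel₀ _ hsk.ne']
        calc C k ≤ 2 * ((Real.sqrt Vt + ε / 4) * Real.sqrt k) + M := step1
          _ = 2 * (Real.sqrt Vt + ε / 4) * Real.sqrt k + M := by ring
      calc C k / Real.sqrt k ≤ 2 * (Real.sqrt Vt + ε / 4) + M / Real.sqrt k := step2
        _ < 2 * (Real.sqrt Vt + ε / 4) + ε / 2 := by linarith
        _ = 2 * Real.sqrt Vt + ε := by ring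
        _ = b := by rw [hεdef]; ring
  -- conclude
  have hsq := key.pow 2
  have heq : (2 * Real.sqrt Vt) ^ 2 = 4 * Vt := by
    rw [mul_pow, Real.sq_sqrt hVt0.le]; ring
  rw [heq] at hsq
  refine hsq.congr' ?_
  filter_upwards [eventually_ge_atTop 1] with k hk
  have hk0 : (0 : ℝ) < k := by exact_mod_cast hk
  rw [div_pow, Real.sq_sqrt hk0.le]
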